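/- Let p > 2, p' = p/(p−1), and l > p/(2(p−2)). Then the pair (𝔉_l, 𝔉_l) is bidemocratic neither for L^p[−1,1] nor for L^{p'}[−1,1]: for every constant C > 0 there exists n ∈ ℕ such that Φ_p(n)·Φ*_{p'}(n) > C·n, and for every C > 0 there exists n ∈ ℕ such that Φ_{p'}(n)·Φ*_p(n) > C·n, where Φ_q(n) = sup_{|P|≤n} ‖∑_{k∈P} f_k^l/‖f_k^l‖_{L^q[−1,1]}‖_{L^q[−1,1]} and Φ*_{q'}(n) = sup_{|P|≤n} ‖∑_{k∈P} ‖f_k^l‖_{L^q[−1,1]}·f_k^l‖_{L^{q'}[−1,1]}. -/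

import Mathlib

open MeasureTheory

/-- The Rademacher functions `r_k(t) = sgn(sin(2^k π t))` on `[0,1]`. -/
noncomputable def rademacher (k : ℕ) (t : ℝ) : ℝ :=
  Real.sign (Real.sin ((2 : ℝ) ^ k * Real.pi * t))

/-- `k_n = 2(2^n − 1)`, i.e. `k_0 = 0` and `k_n = k_{n−1} + 2^n`. -/
def kseq (n : ℕ) : ℕ := 2 * (2 ^ n - 1)

/-- The `j`-th of the `2^n` equal subintervals (each of length `2^{−2n}`)
partitioning `(−2^{−n+1}, −2^{−n}]`, for `1 ≤ j ≤ 2^n`. -/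
noncomputable def Delta (n j : ℕ) : Set ℝ :=
  Set.Ioc (-(2 : ℝ) ^ ((1 : ℝ) - (n : ℝ)) + ((j : ℝ) - 1) * (2 : ℝ) ^ (-(2 : ℝ) * (n : ℝ)))
          (-(2 : ℝ) ^ ((1 : ℝ) - (n : ℝ)) + (j : ℝ) * (2 : ℝ) ^ (-(2 : ℝ) * (n : ℝ)))

/-- The function `f_j^{(n,l)}`: on `[−1,0)` it equals
`√(1 − 2^{−n/l})·χ_j^n` where `χ_j^n = 2^n·1_{Δ_j^n}`, and on `[0,1]` it equals
`2^{−n/(2l)}·r_{k_{n−1}+j}`. -/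
noncomputable def fjn (l : ℝ) (n j : ℕ) (x : ℝ) : ℝ :=
  if x < 0 then
    Real.sqrt (1 - (2 : ℝ) ^ (-(n : ℝ) / l)) *
      Set.indicator (Delta n j) (fun _ => (2 : ℝ) ^ n) x
  else
    (2 : ℝ) ^ (-(n : ℝ) / (2 * l)) * rademacher (kseq (n - 1) + j) x

/-- `f_k^l = f_j^{(n,l)}` for `k = k_{n−1} + j`, `1 ≤ j ≤ 2^n`; for `k ≥ 1` the
block index is `n = log₂(k+1)` and `j = k + 2 − 2^n`. -/
noncomputable def fk (l : ℝ) (k : ℕ) : ℝ → ℝ :=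
  fjn l (Nat.log 2 (k + 1)) (k + 2 - 2 ^ Nat.log 2 (k + 1))

/-- `‖f‖_{L^p[−1,1]} = (∫_{−1}^1 |f|^p)^{1/p}`. -/
noncomputable def lpNormI (p : ℝ) (f : ℝ → ℝ) : ℝ :=
  (∫ x in (-1 : ℝ)..1, |f x| ^ p) ^ (1 / p)


lemma measurable_realSign : Measurable Real.sign := by
  have h : Real.sign = fun r : ℝ => if r < 0 then (-1:ℝ) else if 0 < r then 1 else 0 := rfl
  rw [h]
  exact Measurable.ite (measurableSet_lt measurable_id measurable_const) measurable_const
    (Measurable.ite (measurableSet_lt measurable_const measurable_id) measurable_const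
      measurable_const)

lemma measurable_rademacher (k : ℕ) : Measurable (rademacher k) :=
  measurable_realSign.comp (by fun_prop)

lemma measurable_fjn (l : ℝ) (n j : ℕ) : Measurable (fjn l n j) := by
  unfold fjn
  apply Measurable.ite (measurableSet_lt measurable_id measurable_const)
  · exact (Measurable.indicator measurable_const (by unfold Delta; exact measurableSet_Ioc)).const_mul _
  · exact (measurable_rademacher _).const_mul _

lemma abs_rademacher_le (m : ℕ) (x : ℝ) : |rademacher m x| ≤ 1 := by
  rcases Real.sign_apply_eq (Real.sin ((2:ℝ)^m * Real.pi * x)) with h | h | h <;>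
    simp [rademacher, h]

lemma abs_fjn_le (l : ℝ) (n j : ℕ) (x : ℝ) :
    |fjn l n j x| ≤ (2:ℝ)^n + (2:ℝ)^(-(n:ℝ)/(2*l)) := by
  have h2n : (0:ℝ) ≤ (2:ℝ)^n := by positivity
  have hd : (0:ℝ) < (2:ℝ)^(-(n:ℝ)/(2*l)) := Real.rpow_pos_of_pos two_pos _
  unfold fjn
  split_ifs with hx
  · have hs : Real.sqrt (1 - (2:ℝ)^(-(n:ℝ)/l)) ≤ 1 := by
      rw [show (1:ℝ) = Real.sqrt 1 by simp]
      exact Real.sqrt_le_sqrt (by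
        have : (0:ℝ) < (2:ℝ)^(-(n:ℝ)/l) := Real.rpow_pos_of_pos two_pos _
        simp [Real.sqrt_one]; linarith)
    have hind : |Set.indicator (Delta n j) (fun _ => (2:ℝ)^n) x| ≤ (2:ℝ)^n := by
      by_cases hm : x ∈ Delta n j <;> simp [Set.indicator_of_mem, Set.indicator_of_notMem, hm, h2n, abs_of_nonneg]
    calc |Real.sqrt (1 - (2:ℝ)^(-(n:ℝ)/l)) * Set.indicator (Delta n j) (fun _ => (2:ℝ)^n) x|
        = |Real.sqrt (1 - (2:ℝ)^(-(n:ℝ)/l))| * |Set.indicator (Delta n j) (fun _ => (2:ℝ)^n) x| := abs_mul _ _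
      _ ≤ 1 * (2:ℝ)^n := by
          apply mul_le_mul _ hind (abs_nonneg _) zero_le_one
          rwa [abs_of_nonneg (Real.sqrt_nonneg _)]
      _ ≤ (2:ℝ)^n + (2:ℝ)^(-(n:ℝ)/(2*l)) := by linarith
  · calc |(2:ℝ)^(-(n:ℝ)/(2*l)) * rademacher (kseq (n-1) + j) x|
        = (2:ℝ)^(-(n:ℝ)/(2*l)) * |rademacher (kseq (n-1) + j) x| := by
          rw [abs_mul, abs_of_pos hd]
      _ ≤ (2:ℝ)^(-(n:ℝ)/(2*l)) * 1 := by
          exact mul_le_mul_of_nonneg_left (abs_rademacher_le _ _) hd.le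
      _ ≤ (2:ℝ)^n + (2:ℝ)^(-(n:ℝ)/(2*l)) := by linarith

lemma intervalIntegrable_fjn (l q : ℝ) (hq : 0 ≤ q) (n j : ℕ) (a b : ℝ) :
    IntervalIntegrable (fun x => |fjn l n j x| ^ q) MeasureTheory.volume a b := by
  rw [intervalIntegrable_iff]
  apply Measure.integrableOn_of_bounded (M := ((2:ℝ)^n + (2:ℝ)^(-(n:ℝ)/(2*l)))^q)
  · exact (measure_Ioc_lt_top).ne
  · exact ((measurable_fjn l n j).abs.pow measurable_const).aestronglyMeasurable
  · filter_upwards with x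
    rw [Real.norm_eq_abs, abs_of_nonneg (Real.rpow_nonneg (abs_nonneg _) _)]
    exact Real.rpow_le_rpow (abs_nonneg _) (abs_fjn_le l n j x) hq

lemma integral_abs_rpow_nonneg (q : ℝ) (f : ℝ → ℝ) (a b : ℝ) (hab : a ≤ b) :
    0 ≤ ∫ x in a..b, |f x| ^ q :=
  intervalIntegral.integral_nonneg hab (fun x _ => Real.rpow_nonneg (abs_nonneg _) _)

lemma lpNormI_const_mul (q : ℝ) (hq : 0 < q) (c : ℝ) (f : ℝ → ℝ) :
    lpNormI q (fun x => c * f x) = |c| * lpNormI q f := by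
  unfold lpNormI
  have h1 : ∀ x : ℝ, |c * f x| ^ q = |c| ^ q * |f x| ^ q := fun x => by
    rw [abs_mul, Real.mul_rpow (abs_nonneg _) (abs_nonneg _)]
  simp only [h1]
  rw [intervalIntegral.integral_const_mul,
    Real.mul_rpow (Real.rpow_nonneg (abs_nonneg c) q)
      (integral_abs_rpow_nonneg q f _ _ (by norm_num)),
    ← Real.rpow_mul (abs_nonneg c), mul_one_div_cancel hq.ne', Real.rpow_one]

lemma abs_rademacher_ae (m : ℕ) : ∀ᵐ x : ℝ, |rademacher m x| = 1 := by
  have hsub : {t : ℝ | Real.sin ((2:ℝ)^m * Real.pi * t) = 0} ⊆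
      Set.range (fun n : ℤ => (n:ℝ) / 2^m) := by
    intro t ht
    have ht' : Real.sin ((2:ℝ)^m * Real.pi * t) = 0 := ht
    obtain ⟨n, hn⟩ := Real.sin_eq_zero_iff.mp ht'
    refine ⟨n, ?_⟩
    have h2 : ((2:ℝ)^m) ≠ 0 := by positivity
    rw [show (2:ℝ)^m * Real.pi * t = ((2:ℝ)^m * t) * Real.pi from by ring] at hn
    have h3 := mul_right_cancel₀ Real.pi_ne_zero hn
    field_simp
    linarith
  have h0 : MeasureTheory.volume {t : ℝ | Real.sin ((2:ℝ)^m * Real.pi * t) = 0} = 0 :=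
    measure_mono_null hsub ((Set.countable_range _).measure_zero _)
  filter_upwards [measure_eq_zero_iff_ae_notMem.mp h0] with x hx
  rcases Real.sign_apply_eq_of_ne_zero _ hx with h | h <;> simp [rademacher, h]

lemma integral_fjn_right (l q : ℝ) (n j : ℕ) :
    ∫ x in (0:ℝ)..1, |fjn l n j x| ^ q = ((2:ℝ)^(-(n:ℝ)/(2*l)))^q := by
  have hd : (0:ℝ) < (2:ℝ)^(-(n:ℝ)/(2*l)) := Real.rpow_pos_of_pos two_pos _
  rw [intervalIntegral.integral_of_le (by norm_num : (0:ℝ) ≤ 1)]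
  rw [MeasureTheory.setIntegral_congr_ae measurableSet_Ioc
    (g := fun _ : ℝ => ((2:ℝ)^(-(n:ℝ)/(2*l)))^q) ?_]
  · simp [Real.volume_Ioc]
  · filter_upwards [abs_rademacher_ae (kseq (n-1) + j)] with x hx hmem
    rw [fjn, if_neg (not_lt.mpr hmem.1.le), abs_mul, hx, abs_of_pos hd, mul_one]

lemma Delta_one_eq (n : ℕ) : Delta n 1 = Set.Ioc (-(2:ℝ)^((1:ℝ)-(n:ℝ)))
    (-(2:ℝ)^((1:ℝ)-(n:ℝ)) + (2:ℝ)^(-(2:ℝ)*(n:ℝ))) := by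
  unfold Delta; norm_num

lemma Delta_one_subset (n : ℕ) (hn : 1 ≤ n) :
    Delta n 1 ⊆ Set.Ioc (-1:ℝ) 0 := by
  rw [Delta_one_eq]
  have h1 : (2:ℝ)^((1:ℝ)-(n:ℝ)) ≤ 1 := by
    apply Real.rpow_le_one_of_one_le_of_nonpos one_le_two
    have : (1:ℝ) ≤ (n:ℝ) := by exact_mod_cast hn
    linarith
  have h2 : (2:ℝ)^(-(2:ℝ)*(n:ℝ)) < (2:ℝ)^((1:ℝ)-(n:ℝ)) := by
    apply Real.rpow_lt_rpow_left_iff one_lt_two |>.mpr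
    have : (1:ℝ) ≤ (n:ℝ) := by exact_mod_cast hn
    linarith
  intro x hx
  exact ⟨by linarith [hx.1], by linarith [hx.2]⟩

lemma Delta_one_neg (n : ℕ) (hn : 1 ≤ n) {x : ℝ} (hx : x ∈ Delta n 1) : x < 0 := by
  have := Delta_one_subset n hn hx
  have h2 : (2:ℝ)^(-(2:ℝ)*(n:ℝ)) < (2:ℝ)^((1:ℝ)-(n:ℝ)) := by
    apply Real.rpow_lt_rpow_left_iff one_lt_two |>.mpr
    have : (1:ℝ) ≤ (n:ℝ) := by exact_mod_cast hn
    linarith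
  rw [Delta_one_eq] at hx
  linarith [hx.2]

lemma measurableSet_Delta (n j : ℕ) : MeasurableSet (Delta n j) := by
  unfold Delta; exact measurableSet_Ioc

lemma volume_Delta_one (n : ℕ) :
    MeasureTheory.volume (Delta n 1) = ENNReal.ofReal ((2:ℝ)^(-(2:ℝ)*(n:ℝ))) := by
  rw [Delta_one_eq, Real.volume_Ioc]
  congr 1
  ring

lemma integral_fjn_left_ge (l q : ℝ) (hq : 0 ≤ q) (n : ℕ) (hn : 1 ≤ n) :
    (Real.sqrt (1 - (2:ℝ)^(-(n:ℝ)/l)) * (2:ℝ)^n)^q * (2:ℝ)^(-(2:ℝ)*(n:ℝ))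
      ≤ ∫ x in (-1:ℝ)..0, |fjn l n 1 x| ^ q := by
  set c := Real.sqrt (1 - (2:ℝ)^(-(n:ℝ)/l)) with hc
  set v := c * (2:ℝ)^n with hv
  have hv0 : 0 ≤ v := by positivity
  set w := (2:ℝ)^(-(2:ℝ)*(n:ℝ)) with hw
  have hw0 : (0:ℝ) < w := Real.rpow_pos_of_pos two_pos _
  rw [intervalIntegral.integral_of_le (by norm_num : (-1:ℝ) ≤ 0)]
  have hIg : MeasureTheory.IntegrableOn (fun x => |fjn l n 1 x| ^ q) (Set.Ioc (-1:ℝ) 0)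
      MeasureTheory.volume := by
    have := intervalIntegrable_fjn l q hq n 1 (-1) 0
    rwa [intervalIntegrable_iff, Set.uIoc_of_le (by norm_num : (-1:ℝ) ≤ 0)] at this
  have hIf : MeasureTheory.IntegrableOn (Set.indicator (Delta n 1) (fun _ => v^q))
      (Set.Ioc (-1:ℝ) 0) MeasureTheory.volume := by
    apply MeasureTheory.Integrable.indicator _ (measurableSet_Delta n 1)
    exact (MeasureTheory.integrableOn_const_iff).mpr (Or.inr measure_Ioc_lt_top)
  have hmono : ∀ x ∈ Set.Ioc (-1:ℝ) 0,
      Set.indicator (Delta n 1) (fun _ => v^q) x ≤ |fjn l n 1 x| ^ q := by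
    intro x hx
    by_cases hxD : x ∈ Delta n 1
    · rw [Set.indicator_of_mem hxD]
      have hx0 : x < 0 := Delta_one_neg n hn hxD
      rw [fjn, if_pos hx0, Set.indicator_of_mem hxD]
      rw [abs_of_nonneg (by positivity)]
    · rw [Set.indicator_of_notMem hxD]
      exact Real.rpow_nonneg (abs_nonneg _) _
  calc v^q * w = ∫ x in Set.Ioc (-1:ℝ) 0, Set.indicator (Delta n 1) (fun _ => v^q) x := by
        rw [MeasureTheory.setIntegral_indicator (measurableSet_Delta n 1),
          Set.inter_eq_right.mpr (Delta_one_subset n hn),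
          MeasureTheory.setIntegral_const, measureReal_def, volume_Delta_one, ENNReal.toReal_ofReal hw0.le,
          smul_eq_mul, mul_comm]
    _ ≤ _ := MeasureTheory.setIntegral_mono_on hIf hIg measurableSet_Ioc hmono

lemma integral_fjn_split (l q : ℝ) (hq : 0 ≤ q) (n j : ℕ) :
    ∫ x in (-1:ℝ)..1, |fjn l n j x|^q =
      (∫ x in (-1:ℝ)..0, |fjn l n j x|^q) + ∫ x in (0:ℝ)..1, |fjn l n j x|^q :=
  (intervalIntegral.integral_add_adjacent_intervals (intervalIntegrable_fjn l q hq n j (-1) 0)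
    (intervalIntegrable_fjn l q hq n j 0 1)).symm

lemma lpNormI_fjn_ge_right (l q : ℝ) (hq : 0 < q) (n j : ℕ) :
    (2:ℝ)^(-(n:ℝ)/(2*l)) ≤ lpNormI q (fjn l n j) := by
  have hd : (0:ℝ) < (2:ℝ)^(-(n:ℝ)/(2*l)) := Real.rpow_pos_of_pos two_pos _
  have hI : ((2:ℝ)^(-(n:ℝ)/(2*l)))^q ≤ ∫ x in (-1:ℝ)..1, |fjn l n j x|^q := by
    rw [integral_fjn_split l q hq.le n j, ← integral_fjn_right l q n j]
    have h0 := integral_abs_rpow_nonneg q (fjn l n j) (-1) 0 (by norm_num)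
    linarith
  have := Real.rpow_le_rpow (by positivity) hI (by positivity : (0:ℝ) ≤ 1/q)
  rwa [← Real.rpow_mul hd.le, mul_one_div_cancel hq.ne', Real.rpow_one] at this

lemma lpNormI_fjn_ge_left (l q : ℝ) (hq : 0 < q) (n : ℕ) (hn : 1 ≤ n) :
    Real.sqrt (1 - (2:ℝ)^(-(n:ℝ)/l)) * (2:ℝ)^n * ((2:ℝ)^(-(2:ℝ)*(n:ℝ)))^(1/q)
      ≤ lpNormI q (fjn l n 1) := by
  set v := Real.sqrt (1 - (2:ℝ)^(-(n:ℝ)/l)) * (2:ℝ)^n with hv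
  have hv0 : 0 ≤ v := by positivity
  set w := (2:ℝ)^(-(2:ℝ)*(n:ℝ)) with hw
  have hw0 : (0:ℝ) < w := Real.rpow_pos_of_pos two_pos _
  have hI : v^q * w ≤ ∫ x in (-1:ℝ)..1, |fjn l n 1 x|^q := by
    rw [integral_fjn_split l q hq.le n 1]
    have h1 := integral_fjn_left_ge l q hq.le n hn
    have h0 := integral_abs_rpow_nonneg q (fjn l n 1) 0 1 (by norm_num)
    linarith
  have h2 := Real.rpow_le_rpow (by positivity) hI (by positivity : (0:ℝ) ≤ 1/q)
  rwa [Real.mul_rpow (by positivity) hw0.le, ← Real.rpow_mul hv0,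
    mul_one_div_cancel hq.ne', Real.rpow_one] at h2

lemma fk_two_pow (l : ℝ) (N : ℕ) : fk l (2^N - 1) = fjn l N 1 := by
  have h1 : 1 ≤ 2^N := Nat.one_le_two_pow
  unfold fk
  have h2 : 2^N - 1 + 1 = 2^N := by omega
  rw [h2, Nat.log_pow one_lt_two]
  have h3 : 2^N - 1 + 2 - 2^N = 1 := by omega
  rw [h3]

lemma key_lemma (p l C : ℝ) (hp : 2 < p) (hl : p / (2 * (p - 2)) < l) (hC : 0 < C) :
    ∃ k : ℕ, 1 ≤ k ∧ 0 < lpNormI p (fk l k) ∧ 0 < lpNormI (p/(p-1)) (fk l k) ∧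
      C < lpNormI p (fk l k) * lpNormI (p/(p-1)) (fk l k) := by
  have hp0 : 0 < p := by linarith
  have hq' : 0 < p/(p-1) := by apply div_pos <;> linarith
  have hl0 : 0 < l := lt_trans (div_pos (by linarith) (by linarith)) hl
  set ε := 1 - 2/p - 1/(2*l) with hε_def
  have hε : 0 < ε := by
    have h1 : p < 2*(p-2)*l := by
      rw [div_lt_iff₀ (by linarith : (0:ℝ) < 2*(p-2))] at hl; linarith
    have h2 : 1/(2*l) < (p-2)/p := by
      rw [div_lt_div_iff₀ (by linarith : (0:ℝ) < 2*l) hp0]; nlinarith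
    have h3 : (p-2)/p = 1 - 2/p := by field_simp
    rw [hε_def]; linarith [h3 ▸ h2]
  set c0 := Real.sqrt (1 - (2:ℝ)^(-(1:ℝ)/l)) with hc0_def
  have hc0 : 0 < c0 := by
    rw [hc0_def, Real.sqrt_pos]
    have : (2:ℝ)^(-(1:ℝ)/l) < 1 := by
      rw [show (1:ℝ) = (2:ℝ)^(0:ℝ) by simp]
      exact Real.rpow_lt_rpow_left_iff one_lt_two |>.mpr (div_neg_of_neg_of_pos (by norm_num) hl0)
    linarith
  have h2ε : (1:ℝ) < (2:ℝ)^ε := Real.one_lt_rpow_iff_of_pos two_pos |>.mpr (Or.inl ⟨one_lt_two, hε⟩)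
  obtain ⟨N0, hN0⟩ := pow_unbounded_of_one_lt (C / c0) h2ε
  set N := max N0 1 with hN_def
  have hN1 : 1 ≤ N := le_max_right _ _
  have hCN : C < c0 * ((2:ℝ)^ε)^N := by
    have h4 : ((2:ℝ)^ε)^N0 ≤ ((2:ℝ)^ε)^N := pow_le_pow_right₀ h2ε.le (le_max_left _ _)
    rw [← div_lt_iff₀' hc0]
    exact lt_of_lt_of_le hN0 h4
  refine ⟨2^N - 1, ?_, ?_, ?_, ?_⟩
  · have : 2 ≤ 2^N := by calc 2 = 2^1 := rfl
      _ ≤ 2^N := Nat.pow_le_pow_right (by norm_num) hN1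
    omega
  · rw [fk_two_pow]
    exact lt_of_lt_of_le (Real.rpow_pos_of_pos two_pos _) (lpNormI_fjn_ge_right l p hp0 N 1)
  · rw [fk_two_pow]
    exact lt_of_lt_of_le (Real.rpow_pos_of_pos two_pos _) (lpNormI_fjn_ge_right l (p/(p-1)) hq' N 1)
  · rw [fk_two_pow]
    set cn := Real.sqrt (1 - (2:ℝ)^(-(N:ℝ)/l)) with hcn_def
    set w1 := ((2:ℝ)^(-(2:ℝ)*(N:ℝ)))^(1/p) with hw1_def
    set d := (2:ℝ)^(-(N:ℝ)/(2*l)) with hd_def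
    have hw1 : 0 < w1 := Real.rpow_pos_of_pos (Real.rpow_pos_of_pos two_pos _) _
    have hd : 0 < d := Real.rpow_pos_of_pos two_pos _
    have h2N : (0:ℝ) < (2:ℝ)^N := by positivity
    have hA := lpNormI_fjn_ge_left l p hp0 N hN1
    have hB := lpNormI_fjn_ge_right l (p/(p-1)) hq' N 1
    have hApos : 0 < lpNormI p (fjn l N 1) :=
      lt_of_lt_of_le (Real.rpow_pos_of_pos two_pos _) (lpNormI_fjn_ge_right l p hp0 N 1)
    have hcc : c0 ≤ cn := by
      apply Real.sqrt_le_sqrt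
      have : (2:ℝ)^(-(N:ℝ)/l) ≤ (2:ℝ)^(-(1:ℝ)/l) := by
        apply Real.rpow_le_rpow_left_iff one_lt_two |>.mpr
        have hN' : (1:ℝ) ≤ (N:ℝ) := by exact_mod_cast hN1
        exact (div_le_div_iff_of_pos_right hl0).mpr (by linarith)
      linarith
    have hpow : ((2:ℝ)^ε)^N = (2:ℝ)^(N:ℕ) * w1 * d := by
      rw [hw1_def, hd_def, ← Real.rpow_natCast ((2:ℝ)^ε) N,
        ← Real.rpow_mul (by norm_num : (0:ℝ) ≤ 2),
        ← Real.rpow_natCast (2:ℝ) N,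
        ← Real.rpow_mul (by norm_num : (0:ℝ) ≤ 2),
        ← Real.rpow_add two_pos, ← Real.rpow_add two_pos]
      congr 1
      rw [hε_def]
      field_simp
      ring
    calc C < c0 * ((2:ℝ)^ε)^N := hCN
      _ = (c0 * (2:ℝ)^(N:ℕ) * w1) * d := by rw [hpow]; ring
      _ ≤ (cn * (2:ℝ)^(N:ℕ) * w1) * d := by
          apply mul_le_mul_of_nonneg_right _ hd.le
          apply mul_le_mul_of_nonneg_right _ hw1.le
          exact mul_le_mul_of_nonneg_right hcc h2N.le
      _ ≤ lpNormI p (fjn l N 1) * lpNormI (p/(p-1)) (fjn l N 1) := by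
          exact mul_le_mul hA hB hd.le hApos.le

theorem frakF_not_bidemocratic (p l : ℝ) (hp : 2 < p)
    (hl : p / (2 * (p - 2)) < l) :
    (∀ C : ℝ, 0 < C → ∃ n : ℕ, ∃ P Q : Finset ℕ,
      (∀ k ∈ P, 1 ≤ k) ∧ (∀ k ∈ Q, 1 ≤ k) ∧ P.card ≤ n ∧ Q.card ≤ n ∧
      C * n <
        lpNormI p (fun x => ∑ k ∈ P, (lpNormI p (fk l k))⁻¹ * fk l k x) *
          lpNormI (p / (p - 1))
            (fun x => ∑ k ∈ Q, lpNormI p (fk l k) * fk l k x)) ∧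
    (∀ C : ℝ, 0 < C → ∃ n : ℕ, ∃ P Q : Finset ℕ,
      (∀ k ∈ P, 1 ≤ k) ∧ (∀ k ∈ Q, 1 ≤ k) ∧ P.card ≤ n ∧ Q.card ≤ n ∧
      C * n <
        lpNormI (p / (p - 1))
            (fun x => ∑ k ∈ P, (lpNormI (p / (p - 1)) (fk l k))⁻¹ * fk l k x) *
          lpNormI p (fun x => ∑ k ∈ Q, lpNormI (p / (p - 1)) (fk l k) * fk l k x)) := by
  have hp0 : 0 < p := by linarith
  have hq' : 0 < p/(p-1) := by apply div_pos <;> linarith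
  constructor <;> intro C hC <;>
    obtain ⟨k, hk1, hA, hB, hAB⟩ := key_lemma p l C hp hl hC <;>
    refine ⟨1, {k}, {k}, by simpa using hk1, by simpa using hk1, by simp, by simp, ?_⟩ <;>
    simp only [Finset.sum_singleton, Nat.cast_one, mul_one]
  · rw [lpNormI_const_mul p hp0, lpNormI_const_mul (p/(p-1)) hq',
      abs_inv, abs_of_pos hA, inv_mul_cancel₀ hA.ne', one_mul]
    exact hAB
  · rw [lpNormI_const_mul (p/(p-1)) hq', lpNormI_const_mul p hp0,
      abs_inv, abs_of_pos hB, inv_mul_cancel₀ hB.ne', one_mul]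
    calc C < lpNormI p (fk l k) * lpNormI (p/(p-1)) (fk l k) := hAB
      _ = lpNormI (p/(p-1)) (fk l k) * lpNormI p (fk l k) := mul_comm _ _
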